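/- Under periodic tie-decay input with period T̃ > 0 and decay rate α > 0, the LMDS embedding of the tie-decay network converges to a limit cycle: for every t' ∈ [0, T̃), lim_{q→∞} ψ(B(qT̃ + t')) = ψ(X(t')), where X(t') = Σ_{ℓ=1}^{T} [e^{−α(t' − t_ℓ) mod T̃}/(1 − e^{−αT̃})] Ã_ℓ is the limit-cycle matrix. -/

import Mathlib

open Filter Topology

/-- Under periodic input, the LMDS embedding of the tie-decay network converges to a
limit cycle: `ψ(B(qT̃ + t')) → ψ(X(t'))` as `q → ∞`. -/
theorem embedding_limit_cycle (N T M k : ℕ) (hT : 0 < T)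
    (A : Fin T → Matrix (Fin N) (Fin N) ℝ)
    (Ttil α : ℝ) (hTtil : 0 < Ttil) (hα : 0 < α)
    (ts : Fin T → ℝ) (hmono : StrictMono ts)
    (h0 : 0 ≤ ts ⟨0, hT⟩) (hlt : ∀ ℓ, ts ℓ < Ttil)
    (B : ℝ → Matrix (Fin N) (Fin N) ℝ)
    (hB : ∀ t, B t = ∑' p : ℕ × Fin T,
        if (p.1 : ℝ) * Ttil + ts p.2 ≤ t then
          Real.exp (-α * (t - ((p.1 : ℝ) * Ttil + ts p.2))) • A p.2
        else 0)
    (d : Matrix (Fin N) (Fin N) ℝ → Matrix (Fin N) (Fin N) ℝ → ℝ)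
    (hd : Continuous fun p : Matrix (Fin N) (Fin N) ℝ × Matrix (Fin N) (Fin N) ℝ =>
        d p.1 p.2)
    (tl : Fin M → ℝ) (L' : Matrix (Fin k) (Fin M) ℝ) (δμ : Fin M → ℝ)
    (ψ : Matrix (Fin N) (Fin N) ℝ → Fin k → ℝ)
    (hψ : ∀ C, ψ C = (-(1/2) : ℝ) • L'.mulVec ((fun m => d C (B (tl m)) ^ 2) - δμ))
    (Xc : ℝ → Matrix (Fin N) (Fin N) ℝ)
    (hX : ∀ t', Xc t' = ∑ ℓ : Fin T,
        ((if ts ℓ ≤ t' then Real.exp (-α * (t' - ts ℓ))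
          else Real.exp (-α * (Ttil + t' - ts ℓ))) / (1 - Real.exp (-α * Ttil))) • A ℓ)
    (t' : ℝ) (ht'0 : 0 ≤ t') (ht'T : t' < Ttil) :
    Tendsto (fun q : ℕ => ψ (B ((q : ℝ) * Ttil + t'))) atTop (𝓝 (ψ (Xc t'))) := by
  -- notation
  set r : ℝ := Real.exp (-α * Ttil) with hr_def
  have hr0 : 0 < r := Real.exp_pos _
  have hr1 : r < 1 := by
    rw [hr_def]
    have : -α * Ttil < 0 := by nlinarith
    simpa using Real.exp_lt_one_iff.mpr this
  have hone_sub : (0:ℝ) < 1 - r := by linarith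
  have hts0 : ∀ ℓ, 0 ≤ ts ℓ := by
    intro ℓ
    have : ts ⟨0, hT⟩ ≤ ts ℓ := hmono.monotone (by simp [Fin.le_def])
    linarith
  -- scalar coefficient
  set c : Fin T → ℝ := fun ℓ => Real.exp (-α * (t' - ts ℓ)) with hc_def
  set ind : Fin T → ℝ := fun ℓ => if ts ℓ ≤ t' then (0:ℝ) else c ℓ with hind_def
  set G : ℕ → ℝ := fun q => ∑ j ∈ Finset.range (q + 1), r ^ j with hG_def
  -- Step 1 : compute B (q * Ttil + t') as a finite sum
  have hBeq : ∀ q : ℕ, B ((q : ℝ) * Ttil + t')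
      = ∑ ℓ : Fin T, (c ℓ * G q - ind ℓ) • A ℓ := by
    intro q
    rw [hB]
    have hsupp : ∀ p : ℕ × Fin T, p ∉ Finset.range (q + 1) ×ˢ (Finset.univ : Finset (Fin T)) →
        (if (p.1 : ℝ) * Ttil + ts p.2 ≤ (q : ℝ) * Ttil + t' then
          Real.exp (-α * ((q : ℝ) * Ttil + t' - ((p.1 : ℝ) * Ttil + ts p.2))) • A p.2
        else 0) = 0 := by
      rintro ⟨q', ℓ⟩ hp
      simp only [Finset.mem_product, Finset.mem_range, Finset.mem_univ, and_true,
        not_lt] at hp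
      have hq' : (q : ℝ) + 1 ≤ (q' : ℝ) := by exact_mod_cast hp
      have hcond : ¬ ((q' : ℝ) * Ttil + ts ℓ ≤ (q : ℝ) * Ttil + t') := by
        have := hts0 ℓ
        push_neg
        nlinarith
      simp [hcond]
    rw [tsum_eq_sum hsupp, Finset.sum_product_right]
    refine Finset.sum_congr rfl fun ℓ _ => ?_
    -- inner sum over q' ∈ range (q+1)
    have key : ∑ q' ∈ Finset.range (q + 1),
        (if (q' : ℝ) * Ttil + ts ℓ ≤ (q : ℝ) * Ttil + t' then
          Real.exp (-α * ((q : ℝ) * Ttil + t' - ((q' : ℝ) * Ttil + ts ℓ))) • A ℓ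
        else 0) = (c ℓ * G q - ind ℓ) • A ℓ := by
      have step1 : ∑ q' ∈ Finset.range (q + 1),
          (if (q' : ℝ) * Ttil + ts ℓ ≤ (q : ℝ) * Ttil + t' then
            Real.exp (-α * ((q : ℝ) * Ttil + t' - ((q' : ℝ) * Ttil + ts ℓ))) else 0)
          = c ℓ * G q - ind ℓ := by
        rw [← Finset.sum_range_reflect]
        have hterm : ∀ j ∈ Finset.range (q + 1),
            (if ((q + 1 - 1 - j : ℕ) : ℝ) * Ttil + ts ℓ ≤ (q : ℝ) * Ttil + t' then
              Real.exp (-α * ((q : ℝ) * Ttil + t' - (((q + 1 - 1 - j : ℕ) : ℝ) * Ttil + ts ℓ)))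
            else 0)
            = c ℓ * r ^ j - (if j = 0 then ind ℓ else 0) := by
          intro j hj
          have hjq : j ≤ q := by
            simpa [Nat.lt_succ_iff] using Finset.mem_range.mp hj
          have hcast : ((q + 1 - 1 - j : ℕ) : ℝ) = (q : ℝ) - (j : ℝ) := by
            have : q + 1 - 1 - j = q - j := by omega
            rw [this, Nat.cast_sub hjq]
          rw [hcast]
          have hcondiff : ((q : ℝ) - (j : ℝ)) * Ttil + ts ℓ ≤ (q : ℝ) * Ttil + t'
              ↔ ts ℓ - t' ≤ (j : ℝ) * Ttil := by constructor <;> intro h <;> nlinarith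
          have hexp : Real.exp (-α * ((q : ℝ) * Ttil + t' - (((q : ℝ) - (j : ℝ)) * Ttil + ts ℓ)))
              = c ℓ * r ^ j := by
            rw [hc_def, hr_def, ← Real.exp_nat_mul, ← Real.exp_add]
            ring_nf
          by_cases hts : ts ℓ ≤ t'
          · have hcond : ts ℓ - t' ≤ (j : ℝ) * Ttil := by
              have : (0:ℝ) ≤ (j : ℝ) * Ttil := by positivity
              linarith
            rw [if_pos (hcondiff.mpr hcond), hexp, hind_def]
            simp [hts]
          · by_cases hj0 : j = 0
            · subst hj0
              have hcond : ¬ (ts ℓ - t' ≤ (0 : ℝ) * Ttil) := by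
                push_neg at hts ⊢; linarith
              rw [if_neg (by simpa using (hcondiff.not.mpr (by simpa using hcond)))]
              rw [hind_def]
              simp [hts, hc_def]
            · have hj1 : (1:ℝ) ≤ (j : ℝ) := by
                exact_mod_cast Nat.one_le_iff_ne_zero.mpr hj0
              have hcond : ts ℓ - t' ≤ (j : ℝ) * Ttil := by nlinarith [hlt ℓ]
              rw [if_pos (hcondiff.mpr hcond), hexp]
              simp [hj0]
        rw [Finset.sum_congr rfl hterm, Finset.sum_sub_distrib, ← Finset.mul_sum]
        have : ∑ j ∈ Finset.range (q + 1), (if j = 0 then ind ℓ else 0) = ind ℓ := by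
          rw [Finset.sum_ite_eq' (Finset.range (q + 1)) 0 fun _ => ind ℓ]
          simp
        rw [this, hG_def]
      rw [← step1, Finset.sum_smul]
      refine Finset.sum_congr rfl fun q' _ => ?_
      rw [ite_smul, zero_smul]
    simpa using key
  -- Step 2 : convergence of the matrices
  have hGlim : Tendsto G atTop (𝓝 (1 - r)⁻¹) := by
    have hs : HasSum (fun j : ℕ => r ^ j) (1 - r)⁻¹ :=
      hasSum_geometric_of_lt_one hr0.le hr1
    have := hs.tendsto_sum_nat
    exact this.comp (tendsto_add_atTop_nat 1)
  have hcoef : ∀ ℓ : Fin T,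
      ((if ts ℓ ≤ t' then Real.exp (-α * (t' - ts ℓ))
        else Real.exp (-α * (Ttil + t' - ts ℓ))) / (1 - r))
      = c ℓ * (1 - r)⁻¹ - ind ℓ := by
    intro ℓ
    by_cases hts : ts ℓ ≤ t'
    · simp [hts, hind_def, hc_def, div_eq_mul_inv]
    · have hrc : Real.exp (-α * (Ttil + t' - ts ℓ)) = r * c ℓ := by
        rw [hc_def, hr_def, ← Real.exp_add]; ring_nf
      rw [if_neg hts, hrc, hind_def]
      have h1r : (1 - r) ≠ 0 := ne_of_gt hone_sub
      simp only [hts, if_false]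
      field_simp
      ring
  have hBlim : Tendsto (fun q : ℕ => B ((q : ℝ) * Ttil + t')) atTop (𝓝 (Xc t')) := by
    simp only [hBeq, hX t']
    refine tendsto_finset_sum _ fun ℓ _ => ?_
    rw [hcoef ℓ]
    exact (((hGlim.const_mul (c ℓ)).sub_const (ind ℓ)).smul_const (A ℓ))
  -- Step 3 : continuity of ψ
  have hψcont : Continuous ψ := by
    have := funext hψ
    subst this
    refine Continuous.const_smul (M := ℝ) (g := fun C : Matrix (Fin N) (Fin N) ℝ => L'.mulVec ((fun m => d C (B (tl m)) ^ 2) - δμ)) ?_ _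
    refine continuous_pi fun i => ?_
    unfold Matrix.mulVec dotProduct
    refine continuous_finset_sum _ fun m _ => ?_
    refine Continuous.mul continuous_const ?_
    simp only [Pi.sub_apply]
    refine Continuous.sub ?_ continuous_const
    exact ((hd.comp (continuous_id.prodMk continuous_const)).pow 2)
  exact ((hψcont.tendsto _).comp hBlim)
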